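/- Let G and H be locally finite games. If both G and H have infinite rank, then 𝒢(G + H) = ∞(∅); in particular G + H is a D-position (a draw). -/

import Mathlib

open scoped Classical

universe u

/-- `PosP Γ n` is the set `Pₙ` of positions from which the second player can win
within `n` rounds: `P₀` is the set of terminal positions, and
`Pₙ₊₁ = {x : every option of x has an option in Pₙ}`. -/
def PosP {V : Type*} (Γ : V → Finset V) : ℕ → Set V
  | 0 => {x | Γ x = ∅}
  | n + 1 => {x | ∀ y ∈ Γ x, ∃ z ∈ Γ y, z ∈ PosP Γ n}

/-- `PosN Γ n` is the set `Nₙ`: for `n ≥ 1`, `Nₙ = {x : some option of x lies in Pₙ₋₁}`. -/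
def PosN {V : Type*} (Γ : V → Finset V) : ℕ → Set V
  | 0 => ∅
  | n + 1 => {x | ∃ y ∈ Γ x, y ∈ PosP Γ n}

/-- The P-positions `𝒫 = ⋃ₙ Pₙ` (second player wins). -/
def PPos {V : Type*} (Γ : V → Finset V) : Set V := ⋃ n, PosP Γ n

/-- The N-positions `𝒩 = ⋃ₙ Nₙ` (first player wins). -/
def NPos {V : Type*} (Γ : V → Finset V) : Set V := ⋃ n, PosN Γ n

/-- The D-positions `𝒟 = V ∖ (𝒫 ∪ 𝒩)` (draws). -/
def DPos {V : Type*} (Γ : V → Finset V) : Set V := (PPos Γ ∪ NPos Γ)ᶜ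

/-- The mex (least natural number not attained) of the values `g y`, `y ∈ s`. -/
noncomputable def mexF {V : Type*} (s : Finset V) (g : V → ℕ∞) : ℕ :=
  sInf {n : ℕ | ∀ y ∈ s, g y ≠ (n : ℕ∞)}

/-- The approximants `𝒢ₙ` of the extended Sprague-Grundy function. -/
noncomputable def Gfun {V : Type*} (Γ : V → Finset V) : ℕ → V → ℕ∞
  | 0 => fun x => if Γ x = ∅ then 0 else ⊤
  | n + 1 => fun x =>
      let m := mexF (Γ x) (Gfun Γ n)
      if ∀ y ∈ Γ x, Gfun Γ n y ≤ (m : ℕ∞) ∨ ∃ z ∈ Γ y, Gfun Γ n z = (m : ℕ∞)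
      then (m : ℕ∞) else ⊤

/-- `x` has finite rank with (finite) Sprague-Grundy value `m`:
`𝒢ₙ(x) = m` for all sufficiently large `n`. -/
def HasGVal {V : Type*} (Γ : V → Finset V) (x : V) (m : ℕ) : Prop :=
  ∃ n₀ : ℕ, ∀ n ≥ n₀, Gfun Γ n x = (m : ℕ∞)

/-- `x` has infinite rank: `𝒢ₙ(x) = ∞` for all `n`. -/
def InfiniteRank {V : Type*} (Γ : V → Finset V) (x : V) : Prop :=
  ∀ n : ℕ, Gfun Γ n x = ⊤

/-- The rank of `x`: the least `n` with `𝒢ₙ(x) < ∞`, or `∞` if there is none. -/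
noncomputable def rank {V : Type*} (Γ : V → Finset V) (x : V) : ℕ∞ :=
  sInf ((↑) '' {n : ℕ | Gfun Γ n x ≠ ⊤})

/-- For `x` of infinite rank, the set `𝒜` with `𝒢(x) = ∞(𝒜)`:
the set of finite Sprague-Grundy values of finite-rank options of `x`. -/
def ValSet {V : Type*} (Γ : V → Finset V) (x : V) : Set ℕ :=
  {a | ∃ y ∈ Γ x, HasGVal Γ y a}

/-- The graph of the disjunctive sum: move in exactly one coordinate. -/
noncomputable def sumGraph {V W : Type*} (Γ : V → Finset V) (Δ : W → Finset W) :
    V × W → Finset (V × W) := fun p =>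
  (Γ p.1).image (fun u => (u, p.2)) ∪ (Δ p.2).image (fun w => (p.1, w))

/-- Two (positions of possibly different) games lie in the same outcome class. -/
def SameOutcome {V W : Type*} (Γ : V → Finset V) (x : V) (Δ : W → Finset W) (y : W) : Prop :=
  (x ∈ PPos Γ ↔ y ∈ PPos Δ) ∧ (x ∈ NPos Γ ↔ y ∈ NPos Δ) ∧ (x ∈ DPos Γ ↔ y ∈ DPos Δ)

/-- Equivalence of games: `G + X` and `H + X` have the same outcome for every
locally finite game `X`. -/
def GameEquiv {V W : Type*} (Γ : V → Finset V) (x : V) (Δ : W → Finset W) (y : W) : Prop :=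
  ∀ (X : Type u) (Ξ : X → Finset X) (z : X),
    SameOutcome (sumGraph Γ Ξ) (x, z) (sumGraph Δ Ξ) (y, z)

/-- The nim heap `*m`: positions `0, …, m`, where from `k` one can move to any `j < k`. -/
def nimGraph (m : ℕ) : Fin (m + 1) → Finset (Fin (m + 1)) :=
  fun k => Finset.univ.filter (fun j => j < k)

/-- The reduced graph `R(V)`: the induced graph on the complement of the P-positions. -/
noncomputable def reducedGraph {V : Type*} (Γ : V → Finset V) :
    {x : V // x ∉ PPos Γ} → Finset {x : V // x ∉ PPos Γ} := fun x =>
  (Γ x.1).subtype (fun y => y ∉ PPos Γ)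

/-- The vertex set of `R^{(k)}(V)`: positions which do not have finite rank with
Sprague-Grundy value `< k`. -/
def RkSet {V : Type*} (Γ : V → Finset V) (k : ℕ) : Set V :=
  {x | ¬ ∃ m < k, HasGVal Γ x m}

/-- The induced game graph `R^{(k)}(V)` on `RkSet Γ k`. -/
noncomputable def RkGraph {V : Type*} (Γ : V → Finset V) (k : ℕ) :
    RkSet Γ k → Finset (RkSet Γ k) := fun x =>
  (Γ x.1).subtype (fun y => y ∈ RkSet Γ k)

/-- `V` is `k`-stable: every infinite-rank position `x`, with `𝒢(x) = ∞(𝒜)`,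
has `{0, 1, …, k} ⊆ 𝒜`. -/
def kStable {V : Type*} (Γ : V → Finset V) (k : ℕ) : Prop :=
  ∀ x, InfiniteRank Γ x → ∀ j ≤ k, j ∈ ValSet Γ x

/-- `l` is a directed walk from `o` to `x` in the graph `Γ`. -/
def IsWalk {V : Type*} (Γ : V → Finset V) (o x : V) (l : List V) : Prop :=
  l.head? = some o ∧ l.getLast? = some x ∧ l.Chain' (fun a b => b ∈ Γ a)

/-- `Γ` is a tree with root `o`: `o` has no incoming arcs, and every vertex is
reached from `o` by a unique directed walk. -/
def IsTree {V : Type*} (Γ : V → Finset V) (o : V) : Prop :=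
  (∀ x, o ∉ Γ x) ∧ ∀ x, ∃! l : List V, IsWalk Γ o x l

/-- `f` is a mex labelling: `f x` is the least natural number not attained by `f`
on the options of `x`, for every `x`. -/
def MexLabelling {V : Type*} (Γ : V → Finset V) (f : V → ℕ) : Prop :=
  ∀ x, f x = sInf {n : ℕ | ∀ y ∈ Γ x, f y ≠ n}

section Aux

variable {V : Type*} {W : Type*}

lemma xor_cancel_right' {a a' b : ℕ} (h : a ^^^ b = a' ^^^ b) : a = a' := by
  have := congrArg (· ^^^ b) h
  simpa [Nat.xor_assoc] using this

lemma xor_move {a b m : ℕ} (h : a ^^^ b = m) : a = m ^^^ b := by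
  subst h; simp [Nat.xor_assoc]

lemma mexF_exists_not_attained (s : Finset V) (g : V → ℕ∞) :
    {n : ℕ | ∀ y ∈ s, g y ≠ (n : ℕ∞)}.Nonempty := by
  by_contra hne
  rw [Set.not_nonempty_iff_eq_empty, Set.eq_empty_iff_forall_notMem] at hne
  have h : ∀ n : ℕ, ∃ y ∈ s, g y = (n : ℕ∞) := by
    intro n
    have := hne n
    simpa [Set.mem_setOf_eq] using this
  choose f hf hfg using h
  obtain ⟨a, ha, b, hb, hab, heq⟩ :=
    Finset.exists_ne_map_eq_of_card_lt_of_maps_to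
      (s := Finset.range (s.card + 1)) (t := s)
      (by simp [Finset.card_range]) (fun n _ => hf n)
  exact hab (Nat.cast_inj.mp ((hfg a).symm.trans (heq ▸ hfg b)))

lemma mexF_not_attained (s : Finset V) (g : V → ℕ∞) :
    ∀ y ∈ s, g y ≠ ((mexF s g : ℕ) : ℕ∞) :=
  Nat.sInf_mem (mexF_exists_not_attained s g)

lemma mexF_lt_attained (s : Finset V) (g : V → ℕ∞) {j : ℕ} (hj : j < mexF s g) :
    ∃ y ∈ s, g y = (j : ℕ∞) := by
  have : j ∉ {n : ℕ | ∀ y ∈ s, g y ≠ (n : ℕ∞)} := Nat.notMem_of_lt_sInf hj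
  simpa [Set.mem_setOf_eq, not_forall] using this

lemma mexF_eq_of (s : Finset V) (g : V → ℕ∞) (k : ℕ)
    (h1 : ∀ y ∈ s, g y ≠ (k : ℕ∞)) (h2 : ∀ j < k, ∃ y ∈ s, g y = (j : ℕ∞)) :
    mexF s g = k := by
  have hle : mexF s g ≤ k := Nat.sInf_le h1
  rcases lt_or_eq_of_le hle with hlt | he
  · obtain ⟨y, hy, hgy⟩ := h2 _ hlt
    exact absurd hgy (mexF_not_attained s g y hy)
  · exact he

end Aux
section GfunLemmas

variable {V : Type*} (Γ : V → Finset V)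

lemma Gfun_zero (x : V) : Gfun Γ 0 x = if Γ x = ∅ then 0 else ⊤ := rfl

lemma Gfun_succ (n : ℕ) (x : V) : Gfun Γ (n + 1) x =
    if ∀ y ∈ Γ x, Gfun Γ n y ≤ ((mexF (Γ x) (Gfun Γ n) : ℕ) : ℕ∞) ∨
        ∃ z ∈ Γ y, Gfun Γ n z = ((mexF (Γ x) (Gfun Γ n) : ℕ) : ℕ∞)
    then ((mexF (Γ x) (Gfun Γ n) : ℕ) : ℕ∞) else ⊤ := rfl

lemma Gfun_succ_of_cond {n : ℕ} {x : V}
    (hc : ∀ y ∈ Γ x, Gfun Γ n y ≤ ((mexF (Γ x) (Gfun Γ n) : ℕ) : ℕ∞) ∨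
        ∃ z ∈ Γ y, Gfun Γ n z = ((mexF (Γ x) (Gfun Γ n) : ℕ) : ℕ∞)) :
    Gfun Γ (n + 1) x = ((mexF (Γ x) (Gfun Γ n) : ℕ) : ℕ∞) := by
  rw [Gfun_succ, if_pos hc]

lemma Gfun_succ_ne_top {n : ℕ} {x : V} (h : Gfun Γ (n + 1) x ≠ ⊤) :
    Gfun Γ (n + 1) x = ((mexF (Γ x) (Gfun Γ n) : ℕ) : ℕ∞) ∧
    ∀ y ∈ Γ x, Gfun Γ n y ≤ ((mexF (Γ x) (Gfun Γ n) : ℕ) : ℕ∞) ∨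
        ∃ z ∈ Γ y, Gfun Γ n z = ((mexF (Γ x) (Gfun Γ n) : ℕ) : ℕ∞) := by
  rw [Gfun_succ] at h ⊢
  split_ifs at h ⊢ with hc
  · exact ⟨rfl, hc⟩
  · exact absurd rfl h

lemma Gfun_zero_ne_top {x : V} (h : Gfun Γ 0 x ≠ ⊤) : Γ x = ∅ ∧ Gfun Γ 0 x = 0 := by
  rw [Gfun_zero] at h ⊢
  split_ifs at h ⊢ with hc
  · exact ⟨hc, rfl⟩
  · exact absurd rfl h

lemma mexF_empty (g : V → ℕ∞) (s : Finset V) (hs : s = ∅) : mexF s g = 0 := by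
  subst hs
  exact Nat.sInf_eq_zero.mpr (Or.inl (by simp [Set.mem_setOf_eq]))

lemma Gfun_terminal {x : V} (h : Γ x = ∅) : ∀ n, Gfun Γ n x = 0 := by
  intro n
  cases n with
  | zero => rw [Gfun_zero, if_pos h]
  | succ n =>
      have hc : ∀ y ∈ Γ x, Gfun Γ n y ≤ ((mexF (Γ x) (Gfun Γ n) : ℕ) : ℕ∞) ∨
          ∃ z ∈ Γ y, Gfun Γ n z = ((mexF (Γ x) (Gfun Γ n) : ℕ) : ℕ∞) := by
        intro y hy; rw [h] at hy; exact absurd hy (Finset.notMem_empty y)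
      rw [Gfun_succ_of_cond Γ hc, mexF_empty (Gfun Γ n) (Γ x) h]
      simp

/-- Stabilization: once finite, the Grundy approximant stays constant. -/
lemma Gfun_stab : ∀ n : ℕ, ∀ x : V, Gfun Γ n x ≠ ⊤ → Gfun Γ (n + 1) x = Gfun Γ n x := by
  intro n
  induction n with
  | zero =>
      intro x h
      obtain ⟨hter, hval⟩ := Gfun_zero_ne_top Γ h
      rw [hval, Gfun_terminal Γ hter]
  | succ n ih =>
      intro x h
      obtain ⟨hval, hcond⟩ := Gfun_succ_ne_top Γ h
      set m := mexF (Γ x) (Gfun Γ n) with hm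
      have hmex : mexF (Γ x) (Gfun Γ (n + 1)) = m := by
        apply mexF_eq_of
        · intro y hy hgy
          have hprev : Gfun Γ n y ≠ (m : ℕ∞) := mexF_not_attained _ _ y hy
          by_cases htop : Gfun Γ n y = ⊤
          · rcases hcond y hy with hle | ⟨z, hz, hgz⟩
            · rw [htop] at hle; simp at hle
            · have hzne : Gfun Γ n z ≠ ⊤ := by rw [hgz]; simp
              obtain ⟨hyval, _⟩ := Gfun_succ_ne_top Γ (by rw [hgy]; simp : Gfun Γ (n+1) y ≠ ⊤)
              have : Gfun Γ n z ≠ ((mexF (Γ y) (Gfun Γ n) : ℕ) : ℕ∞) :=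
                mexF_not_attained _ _ z hz
              rw [← hyval, hgy] at this
              exact this hgz
          · rw [ih y htop] at hgy; exact hprev hgy
        · intro j hj
          obtain ⟨y, hy, hgy⟩ := mexF_lt_attained (Γ x) (Gfun Γ n) hj
          exact ⟨y, hy, by rw [ih y (by rw [hgy]; simp), hgy]⟩
      have hcond2 : ∀ y ∈ Γ x, Gfun Γ (n + 1) y ≤ ((mexF (Γ x) (Gfun Γ (n+1)) : ℕ) : ℕ∞) ∨
          ∃ z ∈ Γ y, Gfun Γ (n + 1) z = ((mexF (Γ x) (Gfun Γ (n+1)) : ℕ) : ℕ∞) := by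
        rw [hmex]
        intro y hy
        rcases hcond y hy with hle | ⟨z, hz, hgz⟩
        · left
          have : Gfun Γ n y ≠ ⊤ := fun ht => by rw [ht] at hle; simp at hle
          rw [ih y this]; exact hle
        · right
          exact ⟨z, hz, by rw [ih z (by rw [hgz]; simp), hgz]⟩
      rw [Gfun_succ_of_cond Γ hcond2, hmex, hval]

lemma Gfun_stab_ge {n : ℕ} {x : V} (h : Gfun Γ n x ≠ ⊤) :
    ∀ m, n ≤ m → Gfun Γ m x = Gfun Γ n x := by
  intro m hm
  induction m, hm using Nat.le_induction with
  | base => rfl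
  | succ m hm ih => rw [Gfun_stab Γ m x (by rw [ih]; exact h), ih]

/-- No option has the same finite value as its parent. -/
lemma Gfun_no_follower {n : ℕ} {x : V} (h : Gfun Γ n x ≠ ⊤) :
    ∀ y ∈ Γ x, Gfun Γ n y ≠ Gfun Γ n x := by
  cases n with
  | zero =>
      obtain ⟨hter, _⟩ := Gfun_zero_ne_top Γ h
      intro y hy; rw [hter] at hy; exact absurd hy (Finset.notMem_empty y)
  | succ n =>
      obtain ⟨hval, hcond⟩ := Gfun_succ_ne_top Γ h
      intro y hy hgy
      rw [hval] at hgy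
      have hprev : Gfun Γ n y ≠ ((mexF (Γ x) (Gfun Γ n) : ℕ) : ℕ∞) :=
        mexF_not_attained _ _ y hy
      by_cases htop : Gfun Γ n y = ⊤
      · rcases hcond y hy with hle | ⟨z, hz, hgz⟩
        · rw [htop] at hle; simp at hle
        · obtain ⟨hyval, _⟩ := Gfun_succ_ne_top Γ (by rw [hgy]; simp : Gfun Γ (n+1) y ≠ ⊤)
          have : Gfun Γ n z ≠ ((mexF (Γ y) (Gfun Γ n) : ℕ) : ℕ∞) :=
            mexF_not_attained _ _ z hz
          rw [← hyval, hgy] at this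
          exact this hgz
      · rw [Gfun_stab Γ n y htop] at hgy; exact hprev hgy

/-- Every value below a finite value is attained by an option at the same stage. -/
lemma Gfun_attained_lt {n : ℕ} {x : V} {k : ℕ} (h : Gfun Γ n x = (k : ℕ∞)) :
    ∀ j < k, ∃ y ∈ Γ x, Gfun Γ n y = (j : ℕ∞) := by
  cases n with
  | zero =>
      obtain ⟨hter, hval⟩ := Gfun_zero_ne_top Γ (by rw [h]; simp)
      have : (0 : ℕ∞) = (k : ℕ∞) := by rw [← hval, h]
      have hk : k = 0 := by exact_mod_cast this.symm
      intro j hj; omega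
  | succ n =>
      obtain ⟨hval, _⟩ := Gfun_succ_ne_top Γ (by rw [h]; simp : Gfun Γ (n+1) x ≠ ⊤)
      have hk : mexF (Γ x) (Gfun Γ n) = k := by
        rw [h] at hval; exact_mod_cast hval.symm
      intro j hj
      obtain ⟨y, hy, hgy⟩ := mexF_lt_attained (Γ x) (Gfun Γ n) (hk ▸ hj)
      exact ⟨y, hy, by rw [Gfun_stab Γ n y (by rw [hgy]; simp), hgy]⟩

end GfunLemmas
section SumLemmas

variable {V : Type*} {W : Type*} (Γ : V → Finset V) (Δ : W → Finset W)

lemma xor_cancel_left' {a b b' : ℕ} (h : a ^^^ b = a ^^^ b') : b = b' := by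
  have := congrArg (a ^^^ ·) h
  simpa [← Nat.xor_assoc] using this

lemma mexF_le (s : Finset V) (g : V → ℕ∞) {k : ℕ} (h : ∀ y ∈ s, g y ≠ (k : ℕ∞)) :
    mexF s g ≤ k := Nat.sInf_le h

lemma sumGraph_mem_left {u u' : V} {w : W} (h : u' ∈ Γ u) :
    ((u', w) : V × W) ∈ sumGraph Γ Δ (u, w) := by
  simp only [sumGraph, Finset.mem_union, Finset.mem_image]
  exact Or.inl ⟨u', h, rfl⟩

lemma sumGraph_mem_right {u : V} {w w' : W} (h : w' ∈ Δ w) :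
    ((u, w') : V × W) ∈ sumGraph Γ Δ (u, w) := by
  simp only [sumGraph, Finset.mem_union, Finset.mem_image]
  exact Or.inr ⟨w', h, rfl⟩

lemma sumGraph_cases {u : V} {w : W} {p : V × W} (hp : p ∈ sumGraph Γ Δ (u, w)) :
    (∃ u' ∈ Γ u, p = (u', w)) ∨ ∃ w' ∈ Δ w, p = (u, w') := by
  simp only [sumGraph, Finset.mem_union, Finset.mem_image] at hp
  rcases hp with ⟨u', h1, h2⟩ | ⟨w', h1, h2⟩
  · exact Or.inl ⟨u', h1, h2.symm⟩
  · exact Or.inr ⟨w', h1, h2.symm⟩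

end SumLemmas
section MainLemma

variable {V : Type*} {W : Type*} (Γ : V → Finset V) (Δ : W → Finset W)

lemma Gfun_sum_ne_top :
    ∀ n (u : V) (w : W), Gfun (sumGraph Γ Δ) n (u, w) ≠ ⊤ →
      ∃ a b : ℕ, Gfun Γ n u = (a : ℕ∞) ∧ Gfun Δ n w = (b : ℕ∞) ∧
        Gfun (sumGraph Γ Δ) n (u, w) = ((a ^^^ b : ℕ) : ℕ∞) := by
  intro n
  induction n with
  | zero =>
      intro u w h
      obtain ⟨hter, hval⟩ := Gfun_zero_ne_top _ h
      have hΓ : Γ u = ∅ := by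
        rw [Finset.eq_empty_iff_forall_notMem]
        intro z hz
        exact absurd (hter ▸ sumGraph_mem_left Γ Δ hz) (Finset.notMem_empty _)
      have hΔ : Δ w = ∅ := by
        rw [Finset.eq_empty_iff_forall_notMem]
        intro z hz
        exact absurd (hter ▸ sumGraph_mem_right Γ Δ hz) (Finset.notMem_empty _)
      refine ⟨0, 0, ?_, ?_, ?_⟩
      · rw [Gfun_terminal Γ hΓ 0]; simp
      · rw [Gfun_terminal Δ hΔ 0]; simp
      · rw [hval]; simp
  | succ n ih =>
      intro u w hsum
      obtain ⟨hval, hcond⟩ := Gfun_succ_ne_top _ hsum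
      set M := mexF (sumGraph Γ Δ (u, w)) (Gfun (sumGraph Γ Δ) n) with hMdef
      have hnotM : ∀ p ∈ sumGraph Γ Δ (u, w), Gfun (sumGraph Γ Δ) n p ≠ (M : ℕ∞) :=
        mexF_not_attained _ _
      -- repackaged induction hypothesis
      have IH : ∀ (p : V × W) (c : ℕ), Gfun (sumGraph Γ Δ) n p = (c : ℕ∞) →
          ∃ a b : ℕ, Gfun Γ n p.1 = (a : ℕ∞) ∧ Gfun Δ n p.2 = (b : ℕ∞) ∧ a ^^^ b = c := by
        intro p c hp
        obtain ⟨a, b, h1, h2, h3⟩ := ih p.1 p.2 (by rw [Prod.mk.eta, hp]; simp)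
        rw [Prod.mk.eta, hp] at h3
        exact ⟨a, b, h1, h2, by exact_mod_cast h3.symm⟩
      by_cases hu : Gfun Γ n u = ⊤ <;> by_cases hw : Gfun Δ n w = ⊤
      -- Case D : both infinite at stage n
      · set α := mexF (Γ u) (Gfun Γ n) with hα
        set β := mexF (Δ w) (Gfun Δ n) with hβ
        have halltop : ∀ p ∈ sumGraph Γ Δ (u, w), Gfun (sumGraph Γ Δ) n p = ⊤ := by
          intro p hp
          by_contra hne
          obtain ⟨a, b, h1, h2, _⟩ := ih p.1 p.2 (by rw [Prod.mk.eta]; exact hne)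
          rcases sumGraph_cases Γ Δ hp with ⟨u', _, rfl⟩ | ⟨w', _, rfl⟩
          · exact absurd h2 (by rw [hw]; simp)
          · exact absurd h1 (by rw [hu]; simp)
        have hM0 : M = 0 := by
          have := mexF_le (sumGraph Γ Δ (u, w)) (Gfun (sumGraph Γ Δ) n)
            (k := 0) (fun p hp => by rw [halltop p hp]; simp)
          omega
        -- every option of u has finite value at stage n, attained by an option of w
        have hEL : ∀ u' ∈ Γ u, ∃ e : ℕ, Gfun Γ n u' = (e : ℕ∞) ∧
            ∃ w'' ∈ Δ w, Gfun Δ n w'' = (e : ℕ∞) := by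
          intro u' hu'
          have hmem := sumGraph_mem_left Γ Δ (w := w) hu'
          rcases hcond _ hmem with hle | ⟨q, hq, hqv⟩
          · rw [halltop _ hmem] at hle; simp at hle
          · rw [hM0] at hqv
            obtain ⟨a, b, h1, h2, h3⟩ := IH q 0 (by exact_mod_cast hqv)
            rcases sumGraph_cases Γ Δ hq with ⟨u'', _, rfl⟩ | ⟨w'', hw'', rfl⟩
            · exact absurd h2 (by rw [hw]; simp)
            · have hab : a = b := by
                have := xor_eq_zero_iff.mp h3; omega
              exact ⟨a, h1, w'', hw'', by rw [h2, hab]⟩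
        have hER : ∀ w' ∈ Δ w, ∃ e : ℕ, Gfun Δ n w' = (e : ℕ∞) ∧
            ∃ u'' ∈ Γ u, Gfun Γ n u'' = (e : ℕ∞) := by
          intro w' hw'
          have hmem := sumGraph_mem_right Γ Δ (u := u) hw'
          rcases hcond _ hmem with hle | ⟨q, hq, hqv⟩
          · rw [halltop _ hmem] at hle; simp at hle
          · rw [hM0] at hqv
            obtain ⟨a, b, h1, h2, h3⟩ := IH q 0 (by exact_mod_cast hqv)
            rcases sumGraph_cases Γ Δ hq with ⟨u'', hu'', rfl⟩ | ⟨w'', _, rfl⟩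
            · have hab : a = b := by
                have := xor_eq_zero_iff.mp h3; omega
              exact ⟨b, h2, u'', hu'', by rw [h1, hab]⟩
            · exact absurd h1 (by rw [hu]; simp)
        have hαβ : α = β := by
          by_contra hne
          rcases Nat.lt_or_ge α β with hlt | hge
          · obtain ⟨w', hw', hgw'⟩ := mexF_lt_attained (Δ w) (Gfun Δ n) hlt
            obtain ⟨e, he, u'', hu'', hgu''⟩ := hER w' hw'
            have : e = α := by rw [hgw'] at he; exact_mod_cast he.symm
            exact mexF_not_attained (Γ u) (Gfun Γ n) u'' hu'' (by rw [hgu'', this])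
          · have hlt : β < α := by omega
            obtain ⟨u', hu', hgu'⟩ := mexF_lt_attained (Γ u) (Gfun Γ n) hlt
            obtain ⟨e, he, w'', hw'', hgw''⟩ := hEL u' hu'
            have : e = β := by rw [hgu'] at he; exact_mod_cast he.symm
            exact mexF_not_attained (Δ w) (Gfun Δ n) w'' hw'' (by rw [hgw'', this])
        have hcondu : ∀ y ∈ Γ u, Gfun Γ n y ≤ ((α : ℕ) : ℕ∞) ∨
            ∃ z ∈ Γ y, Gfun Γ n z = ((α : ℕ) : ℕ∞) := by
          intro y hy
          obtain ⟨e, he, -⟩ := hEL y hy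
          by_cases hle : e ≤ α
          · exact Or.inl (by rw [he]; exact_mod_cast hle)
          · exact Or.inr (Gfun_attained_lt Γ he α (by omega))
        have hcondw : ∀ y ∈ Δ w, Gfun Δ n y ≤ ((β : ℕ) : ℕ∞) ∨
            ∃ z ∈ Δ y, Gfun Δ n z = ((β : ℕ) : ℕ∞) := by
          intro y hy
          obtain ⟨e, he, -⟩ := hER y hy
          by_cases hle : e ≤ β
          · exact Or.inl (by rw [he]; exact_mod_cast hle)
          · exact Or.inr (Gfun_attained_lt Δ he β (by omega))
        refine ⟨α, β, Gfun_succ_of_cond Γ hcondu, Gfun_succ_of_cond Δ hcondw, ?_⟩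
        rw [hval, hM0, hαβ, Nat.xor_self]
      -- Case B : u infinite, w finite at stage n
      · obtain ⟨b, hb⟩ := WithTop.ne_top_iff_exists.mp hw
        have hb' : Gfun Δ n w = (b : ℕ∞) := hb.symm
        set α := mexF (Γ u) (Gfun Γ n) with hα
        have hRtop : ∀ w' ∈ Δ w, Gfun (sumGraph Γ Δ) n (u, w') = ⊤ := by
          intro w' hw'
          by_contra hne
          obtain ⟨a', b', h1, -, -⟩ := ih u w' hne
          exact absurd h1 (by rw [hu]; simp)
        have hnot : ∀ p ∈ sumGraph Γ Δ (u, w),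
            Gfun (sumGraph Γ Δ) n p ≠ ((α ^^^ b : ℕ) : ℕ∞) := by
          intro p hp hpv
          obtain ⟨a', b', h1, h2, h3⟩ := IH p _ hpv
          rcases sumGraph_cases Γ Δ hp with ⟨u', hu', rfl⟩ | ⟨w', hw', rfl⟩
          · have hbb : b' = b := by rw [hb'] at h2; exact_mod_cast h2.symm
            rw [hbb] at h3
            have haa : a' = α := xor_cancel_right' h3
            exact mexF_not_attained (Γ u) (Gfun Γ n) u' hu' (by rw [h1, haa])
          · simp [hRtop w' hw'] at hpv
        have hle : M ≤ α ^^^ b := mexF_le _ _ hnot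
        have hge : ¬ M < α ^^^ b := by
          intro hlt
          rcases Nat.lt_xor_cases hlt with hc | hd
          · obtain ⟨u', hu', hgu'⟩ := mexF_lt_attained (Γ u) (Gfun Γ n) hc
            by_cases hsf : Gfun (sumGraph Γ Δ) n (u', w) = ⊤
            · rcases hcond _ (sumGraph_mem_left Γ Δ hu') with hle' | ⟨q, hq, hqv⟩
              · rw [hsf] at hle'; simp at hle'
              · obtain ⟨a', b', h1, h2, h3⟩ := IH q M hqv
                rcases sumGraph_cases Γ Δ hq with ⟨u'', hu'', rfl⟩ | ⟨w'', hw'', rfl⟩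
                · have hbb : b' = b := by rw [hb'] at h2; exact_mod_cast h2.symm
                  rw [hbb] at h3
                  have haa : a' = M ^^^ b := xor_move h3
                  exact Gfun_no_follower Γ (x := u') (by rw [hgu']; simp) u'' hu''
                    (by rw [h1, haa, hgu'])
                · have haa : a' = M ^^^ b := by rw [hgu'] at h1; exact_mod_cast h1.symm
                  rw [haa] at h3
                  have hbb : b' = b := by
                    rw [Nat.xor_comm] at h3
                    have h5 := xor_move h3
                    rwa [← Nat.xor_assoc, Nat.xor_self, Nat.zero_xor] at h5
                  exact Gfun_no_follower Δ (x := w) hw w'' hw'' (by rw [h2, hbb, hb'])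
            · obtain ⟨c, hcv⟩ := WithTop.ne_top_iff_exists.mp hsf
              obtain ⟨a', b', h1, h2, h3⟩ := IH (u', w) c hcv.symm
              have haa : a' = M ^^^ b := by rw [hgu'] at h1; exact_mod_cast h1.symm
              have hbb : b' = b := by rw [hb'] at h2; exact_mod_cast h2.symm
              have hcM : c = M := by
                rw [haa, hbb] at h3
                simpa [Nat.xor_assoc] using h3.symm
              exact hnotM _ (sumGraph_mem_left Γ Δ hu') (by rw [hcM] at hcv; exact hcv.symm)
          · obtain ⟨w', hw', hgw'⟩ := Gfun_attained_lt Δ hb' (M ^^^ α) hd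
            rcases hcond _ (sumGraph_mem_right Γ Δ hw') with hle' | ⟨q, hq, hqv⟩
            · rw [hRtop w' hw'] at hle'; simp at hle'
            · obtain ⟨a', b', h1, h2, h3⟩ := IH q M hqv
              rcases sumGraph_cases Γ Δ hq with ⟨u'', hu'', rfl⟩ | ⟨w'', hw'', rfl⟩
              · have hbb : b' = M ^^^ α := by rw [hgw'] at h2; exact_mod_cast h2.symm
                rw [hbb] at h3
                have haa : a' = α := by
                  have h5 := xor_move h3
                  rwa [← Nat.xor_assoc, Nat.xor_self, Nat.zero_xor] at h5
                exact mexF_not_attained (Γ u) (Gfun Γ n) u'' hu'' (by rw [h1, haa])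
              · exact absurd h1 (by rw [hu]; simp)
        have hMeq : M = α ^^^ b := by omega
        have hcondu : ∀ y ∈ Γ u, Gfun Γ n y ≤ ((α : ℕ) : ℕ∞) ∨
            ∃ z ∈ Γ y, Gfun Γ n z = ((α : ℕ) : ℕ∞) := by
          intro y hy
          by_cases hfin : Gfun Γ n y = ⊤
          · right
            have hsf : Gfun (sumGraph Γ Δ) n (y, w) = ⊤ := by
              by_contra hne
              obtain ⟨a', b', h1, -, -⟩ := ih y w hne
              exact absurd h1 (by rw [hfin]; simp)
            rcases hcond _ (sumGraph_mem_left Γ Δ hy) with hle' | ⟨q, hq, hqv⟩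
            · rw [hsf] at hle'; simp at hle'
            · obtain ⟨a', b', h1, h2, h3⟩ := IH q M hqv
              rcases sumGraph_cases Γ Δ hq with ⟨u'', hu'', rfl⟩ | ⟨w'', hw'', rfl⟩
              · have hbb : b' = b := by rw [hb'] at h2; exact_mod_cast h2.symm
                rw [hbb, hMeq] at h3
                have haa : a' = α := xor_cancel_right' h3
                exact ⟨u'', hu'', by rw [h1, haa]⟩
              · exact absurd h1 (by rw [hfin]; simp)
          · obtain ⟨e, he⟩ := WithTop.ne_top_iff_exists.mp hfin
            by_cases hle' : e ≤ α
            · exact Or.inl (by rw [← he]; exact Nat.cast_le.mpr hle')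
            · exact Or.inr (Gfun_attained_lt Γ he.symm α (by omega))
        refine ⟨α, b, Gfun_succ_of_cond Γ hcondu, ?_, ?_⟩
        · rw [Gfun_stab Δ n w hw, hb']
        · rw [hval, hMeq]
      -- Case C : u finite, w infinite at stage n
      · obtain ⟨a, ha⟩ := WithTop.ne_top_iff_exists.mp hu
        have ha' : Gfun Γ n u = (a : ℕ∞) := ha.symm
        set β := mexF (Δ w) (Gfun Δ n) with hβ
        have hLtop : ∀ u' ∈ Γ u, Gfun (sumGraph Γ Δ) n (u', w) = ⊤ := by
          intro u' hu'
          by_contra hne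
          obtain ⟨a', b', -, h2, -⟩ := ih u' w hne
          exact absurd h2 (by rw [hw]; simp)
        have hnot : ∀ p ∈ sumGraph Γ Δ (u, w),
            Gfun (sumGraph Γ Δ) n p ≠ ((a ^^^ β : ℕ) : ℕ∞) := by
          intro p hp hpv
          obtain ⟨a', b', h1, h2, h3⟩ := IH p _ hpv
          rcases sumGraph_cases Γ Δ hp with ⟨u', hu', rfl⟩ | ⟨w', hw', rfl⟩
          · simp [hLtop u' hu'] at hpv
          · have haa : a' = a := by rw [ha'] at h1; exact_mod_cast h1.symm
            rw [haa] at h3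
            have hbb : b' = β := xor_cancel_left' h3
            exact mexF_not_attained (Δ w) (Gfun Δ n) w' hw' (by rw [h2, hbb])
        have hle : M ≤ a ^^^ β := mexF_le _ _ hnot
        have hge : ¬ M < a ^^^ β := by
          intro hlt
          rcases Nat.lt_xor_cases hlt with hc | hd
          · obtain ⟨u', hu', hgu'⟩ := Gfun_attained_lt Γ ha' (M ^^^ β) hc
            rcases hcond _ (sumGraph_mem_left Γ Δ hu') with hle' | ⟨q, hq, hqv⟩
            · rw [hLtop u' hu'] at hle'; simp at hle'
            · obtain ⟨a', b', h1, h2, h3⟩ := IH q M hqv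
              rcases sumGraph_cases Γ Δ hq with ⟨u'', hu'', rfl⟩ | ⟨w'', hw'', rfl⟩
              · exact absurd h2 (by rw [hw]; simp)
              · have haa : a' = M ^^^ β := by rw [hgu'] at h1; exact_mod_cast h1.symm
                rw [haa, Nat.xor_comm] at h3
                have h5 := xor_move h3
                rw [← Nat.xor_assoc, Nat.xor_self, Nat.zero_xor] at h5
                exact mexF_not_attained (Δ w) (Gfun Δ n) w'' hw'' (by rw [h2, h5])
          · obtain ⟨w', hw', hgw'⟩ := mexF_lt_attained (Δ w) (Gfun Δ n) hd
            by_cases hsf : Gfun (sumGraph Γ Δ) n (u, w') = ⊤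
            · rcases hcond _ (sumGraph_mem_right Γ Δ hw') with hle' | ⟨q, hq, hqv⟩
              · rw [hsf] at hle'; simp at hle'
              · obtain ⟨a', b', h1, h2, h3⟩ := IH q M hqv
                rcases sumGraph_cases Γ Δ hq with ⟨u'', hu'', rfl⟩ | ⟨w'', hw'', rfl⟩
                · have hbb : b' = M ^^^ a := by rw [hgw'] at h2; exact_mod_cast h2.symm
                  rw [hbb] at h3
                  have h5 := xor_move h3
                  rw [← Nat.xor_assoc, Nat.xor_self, Nat.zero_xor] at h5
                  exact Gfun_no_follower Γ (x := u) hu u'' hu'' (by rw [h1, h5, ha'])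
                · have haa : a' = a := by rw [ha'] at h1; exact_mod_cast h1.symm
                  rw [haa, Nat.xor_comm] at h3
                  have h5 := xor_move h3
                  exact Gfun_no_follower Δ (x := w') (by rw [hgw']; simp) w'' hw''
                    (by rw [h2, h5, hgw'])
            · obtain ⟨c, hcv⟩ := WithTop.ne_top_iff_exists.mp hsf
              obtain ⟨a', b', h1, h2, h3⟩ := IH (u, w') c hcv.symm
              have haa : a' = a := by rw [ha'] at h1; exact_mod_cast h1.symm
              have hbb : b' = M ^^^ a := by rw [hgw'] at h2; exact_mod_cast h2.symm
              have hcM : c = M := by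
                rw [haa, hbb, Nat.xor_comm M a, ← Nat.xor_assoc, Nat.xor_self,
                  Nat.zero_xor] at h3
                exact h3.symm
              exact hnotM _ (sumGraph_mem_right Γ Δ hw') (by rw [hcM] at hcv; exact hcv.symm)
        have hMeq : M = a ^^^ β := by omega
        have hcondw : ∀ y ∈ Δ w, Gfun Δ n y ≤ ((β : ℕ) : ℕ∞) ∨
            ∃ z ∈ Δ y, Gfun Δ n z = ((β : ℕ) : ℕ∞) := by
          intro y hy
          by_cases hfin : Gfun Δ n y = ⊤
          · right
            have hsf : Gfun (sumGraph Γ Δ) n (u, y) = ⊤ := by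
              by_contra hne
              obtain ⟨a', b', -, h2, -⟩ := ih u y hne
              exact absurd h2 (by rw [hfin]; simp)
            rcases hcond _ (sumGraph_mem_right Γ Δ hy) with hle' | ⟨q, hq, hqv⟩
            · rw [hsf] at hle'; simp at hle'
            · obtain ⟨a', b', h1, h2, h3⟩ := IH q M hqv
              rcases sumGraph_cases Γ Δ hq with ⟨u'', hu'', rfl⟩ | ⟨w'', hw'', rfl⟩
              · exact absurd h2 (by rw [hfin]; simp)
              · have haa : a' = a := by rw [ha'] at h1; exact_mod_cast h1.symm
                rw [haa, hMeq] at h3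
                have hbb : b' = β := xor_cancel_left' h3
                exact ⟨w'', hw'', by rw [h2, hbb]⟩
          · obtain ⟨e, he⟩ := WithTop.ne_top_iff_exists.mp hfin
            by_cases hle' : e ≤ β
            · exact Or.inl (by rw [← he]; exact Nat.cast_le.mpr hle')
            · exact Or.inr (Gfun_attained_lt Δ he.symm β (by omega))
        refine ⟨a, β, ?_, Gfun_succ_of_cond Δ hcondw, ?_⟩
        · rw [Gfun_stab Γ n u hu, ha']
        · rw [hval, hMeq]
      -- Case A : both finite at stage n
      · obtain ⟨a, ha⟩ := WithTop.ne_top_iff_exists.mp hu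
        obtain ⟨b, hb⟩ := WithTop.ne_top_iff_exists.mp hw
        have ha' : Gfun Γ n u = (a : ℕ∞) := ha.symm
        have hb' : Gfun Δ n w = (b : ℕ∞) := hb.symm
        have hnot : ∀ p ∈ sumGraph Γ Δ (u, w),
            Gfun (sumGraph Γ Δ) n p ≠ ((a ^^^ b : ℕ) : ℕ∞) := by
          intro p hp hpv
          obtain ⟨a', b', h1, h2, h3⟩ := IH p _ hpv
          rcases sumGraph_cases Γ Δ hp with ⟨u', hu', rfl⟩ | ⟨w', hw', rfl⟩
          · have hbb : b' = b := by rw [hb'] at h2; exact_mod_cast h2.symm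
            rw [hbb] at h3
            have haa : a' = a := xor_cancel_right' h3
            exact Gfun_no_follower Γ (x := u) hu u' hu' (by rw [h1, haa, ha'])
          · have haa : a' = a := by rw [ha'] at h1; exact_mod_cast h1.symm
            rw [haa] at h3
            have hbb : b' = b := xor_cancel_left' h3
            exact Gfun_no_follower Δ (x := w) hw w' hw' (by rw [h2, hbb, hb'])
        have hle : M ≤ a ^^^ b := mexF_le _ _ hnot
        have hge : ¬ M < a ^^^ b := by
          intro hlt
          rcases Nat.lt_xor_cases hlt with hc | hd
          · obtain ⟨u', hu', hgu'⟩ := Gfun_attained_lt Γ ha' (M ^^^ b) hc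
            by_cases hsf : Gfun (sumGraph Γ Δ) n (u', w) = ⊤
            · rcases hcond _ (sumGraph_mem_left Γ Δ hu') with hle' | ⟨q, hq, hqv⟩
              · rw [hsf] at hle'; simp at hle'
              · obtain ⟨a', b', h1, h2, h3⟩ := IH q M hqv
                rcases sumGraph_cases Γ Δ hq with ⟨u'', hu'', rfl⟩ | ⟨w'', hw'', rfl⟩
                · have hbb : b' = b := by rw [hb'] at h2; exact_mod_cast h2.symm
                  rw [hbb] at h3
                  have haa := xor_move h3
                  exact Gfun_no_follower Γ (x := u') (by rw [hgu']; simp) u'' hu''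
                    (by rw [h1, haa, hgu'])
                · have haa : a' = M ^^^ b := by rw [hgu'] at h1; exact_mod_cast h1.symm
                  rw [haa, Nat.xor_comm] at h3
                  have h5 := xor_move h3
                  rw [← Nat.xor_assoc, Nat.xor_self, Nat.zero_xor] at h5
                  exact Gfun_no_follower Δ (x := w) hw w'' hw'' (by rw [h2, h5, hb'])
            · obtain ⟨c, hcv⟩ := WithTop.ne_top_iff_exists.mp hsf
              obtain ⟨a', b', h1, h2, h3⟩ := IH (u', w) c hcv.symm
              have haa : a' = M ^^^ b := by rw [hgu'] at h1; exact_mod_cast h1.symm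
              have hbb : b' = b := by rw [hb'] at h2; exact_mod_cast h2.symm
              have hcM : c = M := by
                rw [haa, hbb] at h3
                simpa [Nat.xor_assoc] using h3.symm
              exact hnotM _ (sumGraph_mem_left Γ Δ hu') (by rw [hcM] at hcv; exact hcv.symm)
          · obtain ⟨w', hw', hgw'⟩ := Gfun_attained_lt Δ hb' (M ^^^ a) hd
            by_cases hsf : Gfun (sumGraph Γ Δ) n (u, w') = ⊤
            · rcases hcond _ (sumGraph_mem_right Γ Δ hw') with hle' | ⟨q, hq, hqv⟩
              · rw [hsf] at hle'; simp at hle'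
              · obtain ⟨a', b', h1, h2, h3⟩ := IH q M hqv
                rcases sumGraph_cases Γ Δ hq with ⟨u'', hu'', rfl⟩ | ⟨w'', hw'', rfl⟩
                · have hbb : b' = M ^^^ a := by rw [hgw'] at h2; exact_mod_cast h2.symm
                  rw [hbb] at h3
                  have h5 := xor_move h3
                  rw [← Nat.xor_assoc, Nat.xor_self, Nat.zero_xor] at h5
                  exact Gfun_no_follower Γ (x := u) hu u'' hu'' (by rw [h1, h5, ha'])
                · have haa : a' = a := by rw [ha'] at h1; exact_mod_cast h1.symm
                  rw [haa, Nat.xor_comm] at h3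
                  have h5 := xor_move h3
                  exact Gfun_no_follower Δ (x := w') (by rw [hgw']; simp) w'' hw''
                    (by rw [h2, h5, hgw'])
            · obtain ⟨c, hcv⟩ := WithTop.ne_top_iff_exists.mp hsf
              obtain ⟨a', b', h1, h2, h3⟩ := IH (u, w') c hcv.symm
              have haa : a' = a := by rw [ha'] at h1; exact_mod_cast h1.symm
              have hbb : b' = M ^^^ a := by rw [hgw'] at h2; exact_mod_cast h2.symm
              have hcM : c = M := by
                rw [haa, hbb, Nat.xor_comm M a, ← Nat.xor_assoc, Nat.xor_self,
                  Nat.zero_xor] at h3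
                exact h3.symm
              exact hnotM _ (sumGraph_mem_right Γ Δ hw') (by rw [hcM] at hcv; exact hcv.symm)
        have hMeq : M = a ^^^ b := by omega
        refine ⟨a, b, ?_, ?_, ?_⟩
        · rw [Gfun_stab Γ n u hu, ha']
        · rw [Gfun_stab Δ n w hw, hb']
        · rw [hval, hMeq]

end MainLemma
section Final

lemma posP_val {V : Type*} (Γ : V → Finset V) :
    ∀ n, ∀ x ∈ PosP Γ n, Gfun Γ n x = 0 := by
  intro n
  induction n with
  | zero =>
      intro x hx
      exact Gfun_terminal Γ hx 0
  | succ n ih =>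
      intro x hx
      simp only [PosP, Set.mem_setOf_eq] at hx
      have hmex : mexF (Γ x) (Gfun Γ n) = 0 := by
        have hna : ∀ y ∈ Γ x, Gfun Γ n y ≠ ((0 : ℕ) : ℕ∞) := by
          intro y hy h0
          obtain ⟨z, hz, hzP⟩ := hx y hy
          have hz0 : Gfun Γ n z = 0 := ih z hzP
          refine Gfun_no_follower Γ (x := y) (by rw [h0]; simp) z hz ?_
          rw [hz0, h0]; simp
        have := mexF_le _ _ hna; omega
      have hcond : ∀ y ∈ Γ x, Gfun Γ n y ≤ ((mexF (Γ x) (Gfun Γ n) : ℕ) : ℕ∞) ∨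
          ∃ z ∈ Γ y, Gfun Γ n z = ((mexF (Γ x) (Gfun Γ n) : ℕ) : ℕ∞) := by
        intro y hy
        obtain ⟨z, hz, hzP⟩ := hx y hy
        exact Or.inr ⟨z, hz, by rw [ih z hzP, hmex]; simp⟩
      rw [Gfun_succ_of_cond Γ hcond, hmex]; simp

end Final

/-- if both `G` and `H` have infinite rank then
`𝒢(G + H) = ∞(∅)`; in particular `G + H` is a D-position. -/
theorem stmt4 {V W : Type*} (Γ : V → Finset V) (Δ : W → Finset W) (x : V) (y : W)
    (hx : InfiniteRank Γ x) (hy : InfiniteRank Δ y) :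
    InfiniteRank (sumGraph Γ Δ) (x, y) ∧ ValSet (sumGraph Γ Δ) (x, y) = ∅ ∧
      (x, y) ∈ DPos (sumGraph Γ Δ) := by
  have hIR : InfiniteRank (sumGraph Γ Δ) (x, y) := by
    intro n
    by_contra hne
    obtain ⟨a, b, h1, -, -⟩ := Gfun_sum_ne_top Γ Δ n x y hne
    exact absurd h1 (by rw [hx n]; simp)
  refine ⟨hIR, ?_, ?_⟩
  · rw [Set.eq_empty_iff_forall_notMem]
    intro a ha
    obtain ⟨p, hp, n₀, hn₀⟩ := ha
    have hfin : Gfun (sumGraph Γ Δ) n₀ p ≠ ⊤ := by rw [hn₀ n₀ le_rfl]; simp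
    obtain ⟨a', b', h1, h2, -⟩ :=
      Gfun_sum_ne_top Γ Δ n₀ p.1 p.2 (by rw [Prod.mk.eta]; exact hfin)
    rcases sumGraph_cases Γ Δ hp with ⟨u', hu', rfl⟩ | ⟨w', hw', rfl⟩
    · exact absurd h2 (by rw [hy n₀]; simp)
    · exact absurd h1 (by rw [hx n₀]; simp)
  · simp only [DPos, Set.mem_compl_iff, Set.mem_union, PPos, NPos, Set.mem_iUnion]
    rintro (⟨n, hPn⟩ | ⟨n, hNn⟩)
    · have h0 := posP_val (sumGraph Γ Δ) n (x, y) hPn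
      rw [hIR n] at h0
      exact (by simp : (⊤ : ℕ∞) ≠ 0) h0
    · cases n with
      | zero => exact absurd hNn (by simp [PosN])
      | succ n =>
          obtain ⟨p, hp, hpP⟩ := hNn
          have h0 := posP_val (sumGraph Γ Δ) n p hpP
          have hfin : Gfun (sumGraph Γ Δ) n p ≠ ⊤ := by rw [h0]; simp
          obtain ⟨a', b', h1, h2, -⟩ :=
            Gfun_sum_ne_top Γ Δ n p.1 p.2 (by rw [Prod.mk.eta]; exact hfin)
          rcases sumGraph_cases Γ Δ hp with ⟨u', hu', rfl⟩ | ⟨w', hw', rfl⟩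
          · exact absurd h2 (by rw [hy n]; simp)
          · exact absurd h1 (by rw [hx n]; simp)
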